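/- Under the hypotheses of the previous statement with additionally each g_j Lipschitz with constant G_j, suppose there exist ξ_i > 0 and α > 0 such that -ξ_i(d_i(t) - α) + Σ_j ξ_j G_j |a_{ij}(t)| ≤ 0 for all i and t. Then any two solutions u, v of the system u_i' = -d_i(t)u_i + Σ_j a_{ij}(t)g_j(u_j) + I_i(t) satisfy ‖u(t) - v(t)‖_ξ ≤ e^{-αt} ‖u(0) - v(0)‖_ξ for t ≥ 0, where ‖x‖_ξ = max_i ξ_i^{-1}|x_i|. -/

import Mathlib

open Finset in
/-- weighted exponential contraction for the delay-free
n-dimensional periodic system. -/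
theorem stmt5 (n : ℕ) (ω α Z₀ : ℝ) (ξ G : Fin n → ℝ)
    (d : Fin n → ℝ → ℝ) (a : Fin n → Fin n → ℝ → ℝ) (I : Fin n → ℝ → ℝ)
    (g : Fin n → ℝ → ℝ) (u v : ℝ → Fin n → ℝ)
    (hω : 0 < ω)
    (hd : ∀ i, Continuous (d i)) (ha : ∀ i j, Continuous (a i j))
    (hI : ∀ i, Continuous (I i))
    (hdper : ∀ i, Function.Periodic (d i) ω)
    (haper : ∀ i j, Function.Periodic (a i j) ω)
    (hIper : ∀ i, Function.Periodic (I i) ω)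
    (hdpos : ∀ i t, 0 < d i t)
    (hξ : ∀ i, 0 < ξ i)
    (hg : ∀ j p q, |g j p - g j q| ≤ G j * |p - q|)
    (hα : 0 < α)
    (hstab : ∀ i t, -ξ i * (d i t - α) + ∑ j, ξ j * G j * |a i j t| ≤ 0)
    (hu : ∀ t i, HasDerivAt (fun s => u s i)
      (-d i t * u t i + (∑ j, a i j t * g j (u t j)) + I i t) t)
    (hv : ∀ t i, HasDerivAt (fun s => v s i)
      (-d i t * v t i + (∑ j, a i j t * g j (v t j)) + I i t) t)
    (hZ₀ : ∀ i, (ξ i)⁻¹ * |u 0 i - v 0 i| ≤ Z₀) :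
    ∀ t ≥ (0 : ℝ), ∀ i, (ξ i)⁻¹ * |u t i - v t i| ≤ Real.exp (-α * t) * Z₀ := by
  rcases isEmpty_or_nonempty (Fin n) with hE | hNE
  · exact fun t _ i => (hE.false i).elim
  have Hne : (Finset.univ : Finset (Fin n)).Nonempty := Finset.univ_nonempty
  have hG : ∀ k, 0 ≤ G k := by
    intro k
    have h := hg k 1 0
    have h2 := (abs_nonneg (g k 1 - g k 0)).trans h
    simpa using h2
  -- derivative of the difference
  have hyd : ∀ i t, HasDerivAt (fun s => u s i - v s i)
      (-d i t * (u t i - v t i)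
        + ∑ j, a i j t * (g j (u t j) - g j (v t j))) t := by
    intro i t
    have h := (hu t i).sub (hv t i)
    refine h.congr_deriv ?_
    simp only [mul_sub, Finset.sum_sub_distrib]
    ring
  set w : Fin n → ℝ → ℝ := fun i s => Real.exp (α * s) * (u s i - v s i) with hw_def
  have hw' : ∀ i t, HasDerivAt (w i)
      ((α - d i t) * w i t
        + Real.exp (α * t) * ∑ j, a i j t * (g j (u t j) - g j (v t j))) t := by
    intro i t
    have he : HasDerivAt (fun s => Real.exp (α * s)) (Real.exp (α * t) * α) t := by
      simpa using ((hasDerivAt_id t).const_mul α).exp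
    have h := he.mul (hyd i t)
    refine h.congr_deriv ?_
    simp only [hw_def]
    ring
  have hwc : ∀ i, Continuous (w i) :=
    fun i => continuous_iff_continuousAt.2 fun t => (hw' i t).continuousAt
  set φ : Fin n → ℝ → ℝ := fun i s => (ξ i)⁻¹ * |w i s| with hφ_def
  have hφc : ∀ i, Continuous (φ i) := fun i => continuous_const.mul (hwc i).abs
  have hφnn : ∀ i s, 0 ≤ φ i s :=
    fun i s => mul_nonneg (inv_nonneg.2 (hξ i).le) (abs_nonneg _)
  set f : ℝ → ℝ := fun s => Finset.univ.sup' Hne fun i => φ i s with hf_def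
  have hfc : Continuous f :=
    continuous_iff_continuousAt.2 fun t =>
      ContinuousAt.finset_sup'_apply Hne fun i _ => (hφc i).continuousAt
  have hφ_le : ∀ i s, φ i s ≤ f s :=
    fun i s => Finset.le_sup' (fun i => φ i s) (Finset.mem_univ i)
  have hfnn : ∀ s, 0 ≤ f s :=
    fun s => (hφnn (Classical.arbitrary _) s).trans (hφ_le _ s)
  have hwk : ∀ k s, |w k s| = ξ k * φ k s := by
    intro k s
    simp only [hφ_def]
    rw [← mul_assoc, mul_inv_cancel₀ (hξ k).ne', one_mul]
  -- initial bound
  have hA : f 0 ≤ Z₀ := by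
    apply Finset.sup'_le
    intro i _
    have h := hZ₀ i
    simp only [hφ_def, hw_def, mul_zero, Real.exp_zero, one_mul]
    exact h
  -- the liminf-slope bound
  have hbound : ∀ b : ℝ, ∀ x ∈ Set.Ico (0:ℝ) b, ∀ r, (0:ℝ) < r →
      ∃ᶠ z in nhdsWithin x (Set.Ioi x), slope f x z < r := by
    intro b x _ r hr
    obtain ⟨j, hjfreq⟩ : ∃ j, ∃ᶠ z in nhdsWithin x (Set.Ioi x), f z = φ j z := by
      by_contra hcon
      push_neg at hcon
      have hall : ∀ᶠ z in nhdsWithin x (Set.Ioi x), ∀ j, f z ≠ φ j z := by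
        rw [Filter.eventually_all]
        intro j
        exact hcon j
      obtain ⟨z, hz⟩ := hall.exists
      obtain ⟨j, -, hj⟩ := Finset.exists_mem_eq_sup' Hne fun i => φ i z
      exact hz j hj
    have hjx : f x = φ j x := by
      have hmem : x ∈ closure {z | f z = φ j z} :=
        mem_closure_iff_frequently.2 (hjfreq.filter_mono nhdsWithin_le_nhds)
      exact (isClosed_eq hfc (hφc j)).closure_subset hmem
    set S := ∑ k, a j k x * (g k (u x k) - g k (v x k)) with hS_def
    have hSbound : |Real.exp (α * x) * S| ≤ (∑ k, ξ k * G k * |a j k x|) * f x := by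
      calc |Real.exp (α * x) * S| = Real.exp (α * x) * |S| := by
            rw [abs_mul, abs_of_pos (Real.exp_pos _)]
        _ ≤ Real.exp (α * x) * ∑ k, |a j k x| * (G k * |u x k - v x k|) := by
            apply mul_le_mul_of_nonneg_left _ (Real.exp_pos _).le
            refine (Finset.abs_sum_le_sum_abs _ _).trans (Finset.sum_le_sum fun k _ => ?_)
            rw [abs_mul]
            exact mul_le_mul_of_nonneg_left (hg k _ _) (abs_nonneg _)
        _ = ∑ k, G k * |a j k x| * |w k x| := by
            rw [Finset.mul_sum]
            refine Finset.sum_congr rfl fun k _ => ?_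
            have hwabs : |w k x| = Real.exp (α * x) * |u x k - v x k| := by
              simp only [hw_def]
              rw [abs_mul, abs_of_pos (Real.exp_pos _)]
            rw [hwabs]; ring
        _ ≤ ∑ k, ξ k * G k * |a j k x| * f x := by
            refine Finset.sum_le_sum fun k _ => ?_
            rw [hwk k x]
            calc G k * |a j k x| * (ξ k * φ k x)
                = (G k * |a j k x| * ξ k) * φ k x := by ring
              _ ≤ (G k * |a j k x| * ξ k) * f x := by
                  refine mul_le_mul_of_nonneg_left (hφ_le k x) ?_
                  exact mul_nonneg (mul_nonneg (hG k) (abs_nonneg _)) (hξ k).le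
              _ = ξ k * G k * |a j k x| * f x := by ring
        _ = (∑ k, ξ k * G k * |a j k x|) * f x := by rw [Finset.sum_mul]
    have hkey : (α - d j x) * |w j x| + |Real.exp (α * x) * S| ≤ 0 := by
      have h2 : |w j x| = ξ j * f x := by rw [hwk j x, ← hjx]
      have hs := hstab j x
      calc (α - d j x) * |w j x| + |Real.exp (α * x) * S|
          ≤ (α - d j x) * (ξ j * f x) + (∑ k, ξ k * G k * |a j k x|) * f x := by
            rw [h2]; exact add_le_add le_rfl hSbound
        _ = (-ξ j * (d j x - α) + ∑ k, ξ k * G k * |a j k x|) * f x := by ring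
        _ ≤ 0 := mul_nonpos_of_nonpos_of_nonneg hs (hfnn x)
    set W := (α - d j x) * w j x + Real.exp (α * x) * S with hW_def
    have hwW : HasDerivAt (w j) W x := hw' j x
    have hslope_w : Filter.Tendsto (slope (w j) x) (nhdsWithin x (Set.Ioi x)) (nhds W) := by
      have h := hasDerivAt_iff_tendsto_slope.1 hwW
      exact h.mono_left (nhdsWithin_mono x fun z hz => ne_of_gt hz)
    have hev3 : ∀ᶠ z in nhdsWithin x (Set.Ioi x), x < z := eventually_mem_nhdsWithin
    rcases lt_trichotomy (w j x) 0 with hneg | hzero | hpos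
    · -- negative case
      have hWgt : -(ξ j * r) < W := by
        have hW' : -W ≤ (α - d j x) * |w j x| + |Real.exp (α * x) * S| := by
          calc -W = (α - d j x) * |w j x| + -(Real.exp (α * x) * S) := by
                rw [hW_def, abs_of_neg hneg]; ring
            _ ≤ (α - d j x) * |w j x| + |Real.exp (α * x) * S| :=
                add_le_add le_rfl (neg_le_abs _)
        have := hW'.trans hkey
        nlinarith [mul_pos (hξ j) hr]
      have hev1 : ∀ᶠ z in nhdsWithin x (Set.Ioi x), -(ξ j * r) < slope (w j) x z :=
        hslope_w.eventually (eventually_gt_nhds hWgt)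
      have hev2 : ∀ᶠ z in nhdsWithin x (Set.Ioi x), w j z < 0 :=
        ((hwc j).continuousAt.eventually (eventually_lt_nhds hneg)).filter_mono
          nhdsWithin_le_nhds
      refine (hjfreq.and_eventually (hev1.and (hev2.and hev3))).mono ?_
      rintro z ⟨hfz, hsl, hwz, hxz⟩
      have hslf : slope f x z = (ξ j)⁻¹ * -slope (w j) x z := by
        rw [slope_def_field, slope_def_field, hfz, hjx]
        simp only [hφ_def]
        rw [abs_of_neg hwz, abs_of_neg hneg]
        ring
      rw [hslf]
      have h1 : -slope (w j) x z < ξ j * r := by linarith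
      calc (ξ j)⁻¹ * -slope (w j) x z < (ξ j)⁻¹ * (ξ j * r) :=
            mul_lt_mul_of_pos_left h1 (inv_pos.2 (hξ j))
        _ = r := by field_simp [(hξ j).ne']
    · -- zero case
      have hfx0 : f x = 0 := by
        rw [hjx]
        simp [hφ_def, hzero]
      have hy0 : ∀ k, u x k = v x k := by
        intro k
        have h1 : φ k x = 0 := le_antisymm ((hφ_le k x).trans_eq hfx0) (hφnn k x)
        have habs : |w k x| = 0 := by rw [hwk k x, h1, mul_zero]
        have hw0 : w k x = 0 := abs_eq_zero.1 habs
        simp only [hw_def] at hw0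
        rcases mul_eq_zero.1 hw0 with h | h
        · exact absurd h (Real.exp_ne_zero _)
        · exact sub_eq_zero.1 h
      have hS0 : S = 0 := by
        rw [hS_def]
        refine Finset.sum_eq_zero fun k _ => ?_
        rw [hy0 k, sub_self, mul_zero]
      have hW0 : W = 0 := by rw [hW_def, hzero, hS0]; ring
      have hev1 : ∀ᶠ z in nhdsWithin x (Set.Ioi x), |slope (w j) x z| < ξ j * r := by
        have htd : Filter.Tendsto (fun z => |slope (w j) x z|)
            (nhdsWithin x (Set.Ioi x)) (nhds |W|) := hslope_w.abs
        rw [hW0, abs_zero] at htd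
        exact htd.eventually (eventually_lt_nhds (mul_pos (hξ j) hr))
      refine (hjfreq.and_eventually (hev1.and hev3)).mono ?_
      rintro z ⟨hfz, hsl, hxz⟩
      have hslf : slope f x z = (ξ j)⁻¹ * |slope (w j) x z| := by
        rw [slope_def_field, slope_def_field, hfz, hfx0, hzero, sub_zero, abs_div,
          abs_of_pos (sub_pos.2 hxz)]
        simp only [hφ_def]
        ring
      rw [hslf]
      calc (ξ j)⁻¹ * |slope (w j) x z| < (ξ j)⁻¹ * (ξ j * r) :=
            mul_lt_mul_of_pos_left hsl (inv_pos.2 (hξ j))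
        _ = r := by field_simp [(hξ j).ne']
    · -- positive case
      have hWlt : W < ξ j * r := by
        have hW' : W ≤ (α - d j x) * |w j x| + |Real.exp (α * x) * S| := by
          calc W = (α - d j x) * |w j x| + Real.exp (α * x) * S := by
                rw [hW_def, abs_of_pos hpos]
            _ ≤ (α - d j x) * |w j x| + |Real.exp (α * x) * S| :=
                add_le_add le_rfl (le_abs_self _)
        have := hW'.trans hkey
        nlinarith [mul_pos (hξ j) hr]
      have hev1 : ∀ᶠ z in nhdsWithin x (Set.Ioi x), slope (w j) x z < ξ j * r :=
        hslope_w.eventually (eventually_lt_nhds hWlt)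
      have hev2 : ∀ᶠ z in nhdsWithin x (Set.Ioi x), 0 < w j z :=
        ((hwc j).continuousAt.eventually (eventually_gt_nhds hpos)).filter_mono
          nhdsWithin_le_nhds
      refine (hjfreq.and_eventually (hev1.and (hev2.and hev3))).mono ?_
      rintro z ⟨hfz, hsl, hwz, hxz⟩
      have hslf : slope f x z = (ξ j)⁻¹ * slope (w j) x z := by
        rw [slope_def_field, slope_def_field, hfz, hjx]
        simp only [hφ_def]
        rw [abs_of_pos hwz, abs_of_pos hpos]
        ring
      rw [hslf]
      calc (ξ j)⁻¹ * slope (w j) x z < (ξ j)⁻¹ * (ξ j * r) :=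
            mul_lt_mul_of_pos_left hsl (inv_pos.2 (hξ j))
        _ = r := by field_simp [(hξ j).ne']
  -- apply the fencing theorem and conclude
  intro t ht i
  have hmain : f t ≤ Z₀ := by
    have h := image_le_of_liminf_slope_right_le_deriv_boundary (f := f) (a := 0) (b := t)
      (B := fun _ => Z₀) (B' := fun _ => 0) hfc.continuousOn hA continuousOn_const
      (fun x _ => hasDerivWithinAt_const x _ Z₀) (hbound t)
    exact h ⟨ht, le_refl t⟩
  have h1 : φ i t ≤ Z₀ := (hφ_le i t).trans hmain
  simp only [hφ_def, hw_def] at h1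
  rw [abs_mul, abs_of_pos (Real.exp_pos _)] at h1
  have hinv : Real.exp (-α * t) * Real.exp (α * t) = 1 := by
    rw [← Real.exp_add]
    norm_num
  have h2 := mul_le_mul_of_nonneg_left h1 (Real.exp_pos (-α * t)).le
  calc (ξ i)⁻¹ * |u t i - v t i|
      = Real.exp (-α * t) * ((ξ i)⁻¹ * (Real.exp (α * t) * |u t i - v t i|)) := by
        rw [show Real.exp (-α * t) * ((ξ i)⁻¹ * (Real.exp (α * t) * |u t i - v t i|))
            = (Real.exp (-α * t) * Real.exp (α * t)) * ((ξ i)⁻¹ * |u t i - v t i|) from by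
          ring, hinv, one_mul]
    _ ≤ Real.exp (-α * t) * Z₀ := h2
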